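/- Let u be a function of the spatial variable x only, u(x,t) = u(x), with u ∈ L^1_loc(ℝ^n). Then ∫_ℝ ∫_{ℝ^n} |u(x)| / (1 + |x|^{n+2+2s} + |t|^{n/2+1+s}) dx dt is finite if and only if ∫_{ℝ^n} |u(x)| / (1 + |x|^{n+2s}) dx is finite; moreover the two quantities are comparable up to positive constants depending only on n and s. -/

import Mathlib

open MeasureTheory Real

section helpers

lemma tail_integral {b R : ℝ} (hb : 1 < b) (hR : 0 < R) :
    ∫⁻ t in Set.Ioi R, ENNReal.ofReal (|t| ^ (-b)) = ENNReal.ofReal (R ^ (1 - b) / (b - 1)) := by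
  have h1 : ∫⁻ t in Set.Ioi R, ENNReal.ofReal (|t| ^ (-b))
      = ∫⁻ t in Set.Ioi R, ENNReal.ofReal (t ^ (-b)) := by
    refine setLIntegral_congr_fun measurableSet_Ioi (fun t ht => ?_)
    rw [abs_of_pos (hR.trans ht)]
  have hint : IntegrableOn (fun t : ℝ => t ^ (-b)) (Set.Ioi R) :=
    integrableOn_Ioi_rpow_of_lt (by linarith) hR
  have hnn : 0 ≤ᵐ[volume.restrict (Set.Ioi R)] fun t : ℝ => t ^ (-b) := by
    filter_upwards [ae_restrict_mem measurableSet_Ioi] with t ht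
    exact Real.rpow_nonneg (le_of_lt (hR.trans ht)) _
  rw [h1, ← ofReal_integral_eq_lintegral_ofReal hint hnn,
    integral_Ioi_rpow_of_lt (by linarith) hR]
  congr 1
  rw [show -b + 1 = 1 - b by ring, neg_div, ← div_neg, neg_sub]

lemma neg_tail {b R : ℝ} :
    ∫⁻ t in Set.Iio (-R), ENNReal.ofReal (|t| ^ (-b))
      = ∫⁻ t in Set.Ioi R, ENNReal.ofReal (|t| ^ (-b)) := by
  have h := (Measure.measurePreserving_neg (volume : Measure ℝ)).setLIntegral_comp_emb
    measurableEmbedding_neg (fun t : ℝ => ENNReal.ofReal (|t| ^ (-b))) (Set.Ioi R)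
  simp only [abs_neg, Set.image_neg_Ioi] at h
  exact h.symm

lemma J_bounds {b A : ℝ} (hb : 1 < b) (hA : 1 ≤ A) :
    ENNReal.ofReal (A ^ (1 / b - 1)) ≤ (∫⁻ t : ℝ, ENNReal.ofReal (1 / (A + |t| ^ b))) ∧
    (∫⁻ t : ℝ, ENNReal.ofReal (1 / (A + |t| ^ b)))
      ≤ ENNReal.ofReal (2 + 2 / (b - 1)) * ENNReal.ofReal (A ^ (1 / b - 1)) := by
  have hA0 : (0 : ℝ) < A := lt_of_lt_of_le one_pos hA
  have hb0 : (0 : ℝ) < b := lt_trans one_pos hb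
  set R : ℝ := A ^ (1 / b) with hRdef
  have hR : 0 < R := Real.rpow_pos_of_pos hA0 _
  have hRb : R ^ b = A := by
    rw [hRdef, ← Real.rpow_mul hA0.le, one_div, inv_mul_cancel₀ hb0.ne', Real.rpow_one]
  have hRA : A ^ (1 / b - 1) = R / A := by
    rw [Real.rpow_sub hA0, Real.rpow_one, hRdef]
  have hR1b : R ^ (1 - b) = R / A := by
    rw [show (1 : ℝ) - b = 1 + -b by ring, Real.rpow_add hR, Real.rpow_one,
      Real.rpow_neg hR.le, hRb, div_eq_mul_inv]
  constructor
  · -- lower bound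
    calc ENNReal.ofReal (A ^ (1 / b - 1))
        = ENNReal.ofReal (1 / (2 * A)) * volume (Set.Icc (-R) R) := by
          rw [Real.volume_Icc, ← ENNReal.ofReal_mul (by positivity), hRA]
          congr 1
          field_simp
          ring
      _ = ∫⁻ _ in Set.Icc (-R) R, ENNReal.ofReal (1 / (2 * A)) := (setLIntegral_const _ _).symm
      _ ≤ ∫⁻ t in Set.Icc (-R) R, ENNReal.ofReal (1 / (A + |t| ^ b)) := by
          refine setLIntegral_mono' measurableSet_Icc fun t ht => ?_
          refine ENNReal.ofReal_le_ofReal ?_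
          have h1 : |t| ^ b ≤ A := by
            rw [← hRb]
            exact Real.rpow_le_rpow (abs_nonneg t) (abs_le.mpr ⟨ht.1, ht.2⟩) hb0.le
          have h2 : 0 < A + |t| ^ b := by positivity
          apply one_div_le_one_div_of_le h2
          linarith
      _ ≤ ∫⁻ t : ℝ, ENNReal.ofReal (1 / (A + |t| ^ b)) := setLIntegral_le_lintegral _ _
  · -- upper bound
    have hsplit := (lintegral_add_compl (μ := volume) (fun t : ℝ => ENNReal.ofReal (1 / (A + |t| ^ b)))
      (measurableSet_Icc (a := -R) (b := R))).symm
    rw [hsplit]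
    have h1 : ∫⁻ t in Set.Icc (-R) R, ENNReal.ofReal (1 / (A + |t| ^ b))
        ≤ ENNReal.ofReal (2 * R / A) := by
      calc ∫⁻ t in Set.Icc (-R) R, ENNReal.ofReal (1 / (A + |t| ^ b))
          ≤ ∫⁻ _ in Set.Icc (-R) R, ENNReal.ofReal (1 / A) := by
            refine setLIntegral_mono' measurableSet_Icc fun t ht => ?_
            refine ENNReal.ofReal_le_ofReal ?_
            apply one_div_le_one_div_of_le hA0
            have : 0 ≤ |t| ^ b := Real.rpow_nonneg (abs_nonneg t) _
            linarith
        _ = ENNReal.ofReal (1 / A) * volume (Set.Icc (-R) R) := setLIntegral_const _ _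
        _ = ENNReal.ofReal (2 * R / A) := by
            rw [Real.volume_Icc, ← ENNReal.ofReal_mul (by positivity)]
            congr 1
            field_simp
            ring
    have h2 : ∫⁻ t in (Set.Icc (-R) R)ᶜ, ENNReal.ofReal (1 / (A + |t| ^ b))
        ≤ ENNReal.ofReal (R ^ (1 - b) / (b - 1)) + ENNReal.ofReal (R ^ (1 - b) / (b - 1)) := by
      have hsub : (Set.Icc (-R) R)ᶜ ⊆ Set.Iio (-R) ∪ Set.Ioi R := by
        intro t ht
        simp only [Set.mem_Icc, Set.mem_compl_iff, not_and_or, not_le] at ht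
        rcases ht with h | h
        · exact Or.inl h
        · exact Or.inr h
      calc ∫⁻ t in (Set.Icc (-R) R)ᶜ, ENNReal.ofReal (1 / (A + |t| ^ b))
          ≤ ∫⁻ t in Set.Iio (-R) ∪ Set.Ioi R, ENNReal.ofReal (1 / (A + |t| ^ b)) :=
            lintegral_mono_set hsub
        _ ≤ (∫⁻ t in Set.Iio (-R), ENNReal.ofReal (1 / (A + |t| ^ b)))
            + ∫⁻ t in Set.Ioi R, ENNReal.ofReal (1 / (A + |t| ^ b)) := lintegral_union_le _ _ _
        _ ≤ (∫⁻ t in Set.Iio (-R), ENNReal.ofReal (|t| ^ (-b)))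
            + ∫⁻ t in Set.Ioi R, ENNReal.ofReal (|t| ^ (-b)) := by
            gcongr ?_ + ?_
            · refine setLIntegral_mono' measurableSet_Iio fun t ht => ?_
              refine ENNReal.ofReal_le_ofReal ?_
              have htR : R < |t| := by
                rw [abs_of_neg (by simp only [Set.mem_Iio] at ht; linarith)]
                simp only [Set.mem_Iio] at ht; linarith
              have h3 : 0 < |t| ^ b := Real.rpow_pos_of_pos (hR.trans htR) _
              rw [Real.rpow_neg (abs_nonneg t), ← one_div]
              apply one_div_le_one_div_of_le h3
              linarith
            · refine setLIntegral_mono' measurableSet_Ioi fun t ht => ?_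
              refine ENNReal.ofReal_le_ofReal ?_
              have htR : R < |t| := lt_of_lt_of_le (Set.mem_Ioi.mp ht) (le_abs_self t)
              have h3 : 0 < |t| ^ b := Real.rpow_pos_of_pos (hR.trans htR) _
              rw [Real.rpow_neg (abs_nonneg t), ← one_div]
              apply one_div_le_one_div_of_le h3
              linarith
        _ = ENNReal.ofReal (R ^ (1 - b) / (b - 1)) + ENNReal.ofReal (R ^ (1 - b) / (b - 1)) := by
            rw [neg_tail, tail_integral hb hR]
    calc (∫⁻ t in Set.Icc (-R) R, ENNReal.ofReal (1 / (A + |t| ^ b)))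
          + ∫⁻ t in (Set.Icc (-R) R)ᶜ, ENNReal.ofReal (1 / (A + |t| ^ b))
        ≤ ENNReal.ofReal (2 * R / A)
          + (ENNReal.ofReal (R ^ (1 - b) / (b - 1)) + ENNReal.ofReal (R ^ (1 - b) / (b - 1))) :=
          add_le_add h1 h2
      _ = ENNReal.ofReal (2 + 2 / (b - 1)) * ENNReal.ofReal (A ^ (1 / b - 1)) := by
          have hb1' : (0:ℝ) < b - 1 := by linarith
          have hq : (0:ℝ) ≤ R ^ (1 - b) / (b - 1) :=
            div_nonneg (Real.rpow_nonneg hR.le _) hb1'.le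
          have hK : (0:ℝ) ≤ 2 + 2 / (b - 1) := by positivity
          rw [← ENNReal.ofReal_add hq hq,
            ← ENNReal.ofReal_add (by positivity) (by linarith),
            ← ENNReal.ofReal_mul hK, hRA, hR1b]
          congr 1
          have hb1 : b - 1 ≠ 0 := by linarith
          field_simp
          ring

lemma spatial_bounds {b r : ℝ} (hb : 1 < b) (hr : 0 ≤ r) :
    1 / (2 * (1 + r ^ (2 * (b - 1)))) ≤ (1 + r ^ (2 * b)) ^ (1 / b - 1) ∧
    (1 + r ^ (2 * b)) ^ (1 / b - 1) ≤ 2 / (1 + r ^ (2 * (b - 1))) := by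
  have hb0 : (0 : ℝ) < b := lt_trans one_pos hb
  set A : ℝ := 1 + r ^ (2 * b) with hAdef
  set B : ℝ := 1 + r ^ (2 * (b - 1)) with hBdef
  have hA1 : 1 ≤ A := le_add_of_nonneg_right (Real.rpow_nonneg hr _)
  have hA0 : (0 : ℝ) < A := lt_of_lt_of_le one_pos hA1
  have hB1 : 1 ≤ B := le_add_of_nonneg_right (Real.rpow_nonneg hr _)
  have hB0 : (0 : ℝ) < B := lt_of_lt_of_le one_pos hB1
  set e : ℝ := (b - 1) / b with hedef
  have he0 : 0 < e := div_pos (by linarith) hb0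
  have he1 : e ≤ 1 := by rw [hedef, div_le_one hb0]; linarith
  have hexp : (1 : ℝ) / b - 1 = -e := by
    rw [hedef]; field_simp; ring
  have hAe : A ^ (1 / b - 1) = (A ^ e)⁻¹ := by rw [hexp, Real.rpow_neg hA0.le]
  have hre : (r ^ (2 * b)) ^ e = r ^ (2 * (b - 1)) := by
    rw [← Real.rpow_mul hr]
    congr 1
    rw [hedef]
    field_simp
  set M : ℝ := max 1 (r ^ (2 * b)) with hMdef
  have hM1 : (1 : ℝ) ≤ M := le_max_left _ _
  have hM0 : (0 : ℝ) < M := lt_of_lt_of_le one_pos hM1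
  have hMA : M ≤ A := max_le (by linarith [Real.rpow_nonneg hr (2*b)])
    (le_add_of_nonneg_left zero_le_one)
  have hAM : A ≤ 2 * M := by
    have h1 : r ^ (2 * b) ≤ M := le_max_right _ _
    have h2 : (1:ℝ) ≤ M := hM1
    rw [hAdef]; linarith
  have hMe : M ^ e ≤ B := by
    rcases le_total (r ^ (2 * b)) 1 with h | h
    · rw [hMdef, max_eq_left h, Real.one_rpow]; exact hB1
    · rw [hMdef, max_eq_right h, hre]; exact le_add_of_nonneg_left zero_le_one
  have hAe0 : (0 : ℝ) < A ^ e := Real.rpow_pos_of_pos hA0 _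
  have claim1 : A ^ e ≤ 2 * B := by
    calc A ^ e ≤ (2 * M) ^ e := Real.rpow_le_rpow hA0.le hAM he0.le
      _ = 2 ^ e * M ^ e := Real.mul_rpow (by norm_num) hM0.le
      _ ≤ 2 * B := by
          have h2e : (2:ℝ) ^ e ≤ 2 := by
            calc (2:ℝ) ^ e ≤ 2 ^ (1:ℝ) := Real.rpow_le_rpow_of_exponent_le one_le_two he1
              _ = 2 := Real.rpow_one 2
          exact mul_le_mul h2e hMe (Real.rpow_pos_of_pos hM0 _).le (by norm_num)
  have claim2 : B ≤ 2 * A ^ e := by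
    have h1 : (1 : ℝ) ≤ A ^ e := by
      calc (1:ℝ) = 1 ^ e := (Real.one_rpow e).symm
        _ ≤ A ^ e := Real.rpow_le_rpow zero_le_one hA1 he0.le
    have h2 : r ^ (2 * (b - 1)) ≤ A ^ e := by
      rw [← hre]
      exact Real.rpow_le_rpow (Real.rpow_nonneg hr _)
        (le_add_of_nonneg_left zero_le_one) he0.le
    rw [hBdef]; linarith
  constructor
  · rw [hAe, ← one_div]
    exact one_div_le_one_div_of_le hAe0 claim1
  · rw [hAe, ← one_div, div_le_div_iff₀ hAe0 hB0]
    linarith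

end helpers

/-- The weight integral associated with the fractional Laplacian. -/
noncomputable def spaceInt (n : ℕ) (s : ℝ) (u : EuclideanSpace ℝ (Fin n) → ℝ) : ENNReal :=
  ∫⁻ x : EuclideanSpace ℝ (Fin n), ENNReal.ofReal (|u x| / (1 + ‖x‖ ^ ((n : ℝ) + 2 * s)))

/-- The weight integral associated with the master operator. -/
noncomputable def spaceTimeInt (n : ℕ) (s : ℝ) (u : EuclideanSpace ℝ (Fin n) → ℝ) : ENNReal :=
  ∫⁻ t : ℝ, ∫⁻ x : EuclideanSpace ℝ (Fin n),
    ENNReal.ofReal (|u x| / (1 + ‖x‖ ^ ((n : ℝ) + 2 + 2 * s) + |t| ^ ((n : ℝ) / 2 + 1 + s)))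

theorem stmt3 (n : ℕ) (hn : 1 ≤ n) (s : ℝ) (hs : s ∈ Set.Ioo (0 : ℝ) 1) :
    ∃ c₁ c₂ : ENNReal, 0 < c₁ ∧ c₂ < ⊤ ∧
      ∀ u : EuclideanSpace ℝ (Fin n) → ℝ, MeasureTheory.LocallyIntegrable u volume →
        (spaceTimeInt n s u < ⊤ ↔ spaceInt n s u < ⊤)
        ∧ c₁ * spaceInt n s u ≤ spaceTimeInt n s u
        ∧ spaceTimeInt n s u ≤ c₂ * spaceInt n s u := by
  set b : ℝ := (n : ℝ) / 2 + 1 + s with hbdef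
  have hb : 1 < b := by
    have h1 : (0 : ℝ) ≤ (n : ℝ) := n.cast_nonneg
    have h2 : 0 < s := hs.1
    rw [hbdef]; linarith
  have hb1 : (0 : ℝ) < b - 1 := by linarith
  set K : ℝ := 2 + 2 / (b - 1) with hKdef
  have hK0 : (0 : ℝ) < K := by positivity
  refine ⟨ENNReal.ofReal (1 / 2), ENNReal.ofReal (2 * K),
    ENNReal.ofReal_pos.mpr (by norm_num), ENNReal.ofReal_lt_top, fun u hu => ?_⟩
  have hexp1 : ((n : ℝ) + 2 + 2 * s) = 2 * b := by rw [hbdef]; ring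
  have hexp2 : ((n : ℝ) + 2 * s) = 2 * (b - 1) := by rw [hbdef]; ring
  -- rewrite the two integrals
  have hspace : spaceInt n s u
      = ∫⁻ x : EuclideanSpace ℝ (Fin n),
          ENNReal.ofReal (|u x| / (1 + ‖x‖ ^ (2 * (b - 1)))) := by
    rw [spaceInt]; simp_rw [hexp2]
  have hswap : spaceTimeInt n s u
      = ∫⁻ x : EuclideanSpace ℝ (Fin n), ∫⁻ t : ℝ,
          ENNReal.ofReal (|u x| / (1 + ‖x‖ ^ (2 * b) + |t| ^ b)) := by
    rw [spaceTimeInt]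
    simp_rw [hexp1, ← hbdef]
    refine lintegral_lintegral_swap ?_
    have hu2 : AEMeasurable (fun p : ℝ × EuclideanSpace ℝ (Fin n) => u p.2)
        (volume.prod volume) :=
      hu.aestronglyMeasurable.aemeasurable.comp_quasiMeasurePreserving
        Measure.quasiMeasurePreserving_snd
    have hden : Measurable (fun p : ℝ × EuclideanSpace ℝ (Fin n) =>
        1 + ‖p.2‖ ^ (2 * b) + |p.1| ^ b) := by fun_prop
    exact (((continuous_abs.measurable.comp_aemeasurable hu2)).div hden.aemeasurable).ennreal_ofReal
  -- pointwise bounds in x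
  have hptwise : ∀ x : EuclideanSpace ℝ (Fin n),
      ENNReal.ofReal (1 / 2) * ENNReal.ofReal (|u x| / (1 + ‖x‖ ^ (2 * (b - 1))))
        ≤ (∫⁻ t : ℝ, ENNReal.ofReal (|u x| / (1 + ‖x‖ ^ (2 * b) + |t| ^ b)))
      ∧ (∫⁻ t : ℝ, ENNReal.ofReal (|u x| / (1 + ‖x‖ ^ (2 * b) + |t| ^ b)))
        ≤ ENNReal.ofReal (2 * K) * ENNReal.ofReal (|u x| / (1 + ‖x‖ ^ (2 * (b - 1)))) := by
    intro x
    set c : ℝ := |u x| with hcdef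
    have hc0 : 0 ≤ c := abs_nonneg _
    set A : ℝ := 1 + ‖x‖ ^ (2 * b) with hAdef
    set B : ℝ := 1 + ‖x‖ ^ (2 * (b - 1)) with hBdef
    have hA1 : 1 ≤ A := le_add_of_nonneg_right (Real.rpow_nonneg (norm_nonneg x) _)
    have hA0 : (0 : ℝ) < A := lt_of_lt_of_le one_pos hA1
    have hB1 : 1 ≤ B := le_add_of_nonneg_right (Real.rpow_nonneg (norm_nonneg x) _)
    have hB0 : (0 : ℝ) < B := lt_of_lt_of_le one_pos hB1
    have hfac : (∫⁻ t : ℝ, ENNReal.ofReal (c / (A + |t| ^ b)))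
        = ENNReal.ofReal c * ∫⁻ t : ℝ, ENNReal.ofReal (1 / (A + |t| ^ b)) := by
      rw [← lintegral_const_mul' _ _ ENNReal.ofReal_ne_top]
      refine lintegral_congr fun t => ?_
      rw [← ENNReal.ofReal_mul hc0, mul_one_div]
    have hJ := J_bounds hb hA1
    have hsp := spatial_bounds hb (norm_nonneg x)
    rw [← hAdef, ← hBdef] at hsp
    constructor
    · have h1 : ENNReal.ofReal (1 / 2) * ENNReal.ofReal (c / B)
          = ENNReal.ofReal c * ENNReal.ofReal (1 / (2 * B)) := by
        rw [← ENNReal.ofReal_mul (by norm_num), ← ENNReal.ofReal_mul hc0]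
        congr 1
        field_simp
      rw [hfac, h1]
      refine mul_le_mul_right ?_ _
      refine le_trans (ENNReal.ofReal_le_ofReal hsp.1) hJ.1
    · rw [hfac]
      have h2 : ENNReal.ofReal c * (ENNReal.ofReal K * ENNReal.ofReal (2 / B))
          = ENNReal.ofReal (2 * K) * ENNReal.ofReal (c / B) := by
        rw [← ENNReal.ofReal_mul hK0.le, ← ENNReal.ofReal_mul hc0,
          ← ENNReal.ofReal_mul (by positivity)]
        congr 1
        field_simp
      rw [← h2]
      refine le_trans (mul_le_mul_right hJ.2 _) ?_
      refine mul_le_mul_right (mul_le_mul_right (ENNReal.ofReal_le_ofReal hsp.2) _) _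
  have hlow : ENNReal.ofReal (1 / 2) * spaceInt n s u ≤ spaceTimeInt n s u := by
    rw [hspace, hswap, ← lintegral_const_mul' _ _ ENNReal.ofReal_ne_top]
    exact lintegral_mono fun x => (hptwise x).1
  have hup : spaceTimeInt n s u ≤ ENNReal.ofReal (2 * K) * spaceInt n s u := by
    rw [hspace, hswap, ← lintegral_const_mul' _ _ ENNReal.ofReal_ne_top]
    exact lintegral_mono fun x => (hptwise x).2
  refine ⟨⟨fun h => ?_, fun h => ?_⟩, hlow, hup⟩
  · have hclow : (ENNReal.ofReal (1 / 2)) ≠ 0 := by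
      simp [ENNReal.ofReal_eq_zero]
    have : spaceInt n s u ≤ (ENNReal.ofReal (1 / 2))⁻¹ * spaceTimeInt n s u := by
      rw [← one_mul (spaceInt n s u),
        ← ENNReal.inv_mul_cancel hclow ENNReal.ofReal_ne_top, mul_assoc]
      exact mul_le_mul_right hlow _
    exact lt_of_le_of_lt this (ENNReal.mul_lt_top (by simp [hclow]) h)
  · exact lt_of_le_of_lt hup (ENNReal.mul_lt_top ENNReal.ofReal_lt_top h)
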